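/- Let α be an algebra automorphism of the tensor product of finite-dimensional matrix algebras indexed by vertices of a metric graph, with range R (meaning: for any operator O supported on a site x, α(O) is supported within distance R of x). Then α⁻¹ also has range R. -/
import Mathlib


open Matrix

/-- A configuration of the local (computational-basis) indices of all sites. -/
abbrev Cfg {V : Type} (d : V → ℕ) := ∀ i, Fin (d i)

/-- The algebra of operators on the tensor-product Hilbert space `⊗ᵢ ℂ^{d i}`. -/
abbrev Op {V : Type} [Fintype V] [DecidableEq V] (d : V → ℕ) :=
  Matrix (Cfg d) (Cfg d) ℂ

open Classical in
/-- `M` is supported on the set of sites `S` if `M = N ⊗ Id` for some operator `N`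
acting only on the tensor factors in `S`. -/
def SupportedOn {V : Type} [Fintype V] [DecidableEq V] (d : V → ℕ)
    (S : Set V) (M : Op d) : Prop :=
  ∃ N : Matrix (∀ i : S, Fin (d i.1)) (∀ i : S, Fin (d i.1)) ℂ,
    ∀ f g : Cfg d, M f g =
      if ∀ i ∉ S, f i = g i then N (fun i => f i.1) (fun i => g i.1) else 0

/-- The (minimal) support of an operator: the set of sites belonging to every set on
which the operator is supported.  Scalars have empty support. -/
def Supp {V : Type} [Fintype V] [DecidableEq V] (d : V → ℕ) (M : Op d) : Set V :=
  {x | ∀ S : Set V, SupportedOn d S M → x ∈ S}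

section Aux

open Classical

variable {V : Type} [Fintype V] [DecidableEq V] {d : V → ℕ}

/-- Entry formula for the product of two operators with disjoint supports. -/
lemma mul_entry_of_disjoint {S T : Set V} {M P : Op d}
    {N : Matrix (∀ i : S, Fin (d i.1)) (∀ i : S, Fin (d i.1)) ℂ}
    {Q : Matrix (∀ i : T, Fin (d i.1)) (∀ i : T, Fin (d i.1)) ℂ}
    (hN : ∀ f g : Cfg d, M f g =
      if ∀ i ∉ S, f i = g i then N (fun i => f i.1) (fun i => g i.1) else 0)
    (hQ : ∀ f g : Cfg d, P f g =
      if ∀ i ∉ T, f i = g i then Q (fun i => f i.1) (fun i => g i.1) else 0)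
    (hd : Disjoint S T) (f g : Cfg d) :
    (M * P) f g = if (∀ i, i ∉ S → i ∉ T → f i = g i) then
      N (fun i => f i.1) (fun i => g i.1) * Q (fun i => f i.1) (fun i => g i.1)
      else 0 := by
  classical
  set h₀ : Cfg d := fun i => if i ∈ S then g i else f i with hh₀
  rw [Matrix.mul_apply]
  rw [Finset.sum_eq_single h₀]
  · have hM : M f h₀ = N (fun i => f i.1) (fun i => g i.1) := by
      rw [hN]
      rw [if_pos (fun i hi => by simp [hh₀, hi])]
      congr 1
      funext i
      simp [hh₀, i.2]
    have hTS : ∀ i : T, h₀ i.1 = f i.1 := by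
      intro i
      have : i.1 ∉ S := fun hi => (hd.le_bot ⟨hi, i.2⟩)
      simp [hh₀, this]
    rw [hM, hQ]
    by_cases hc : ∀ i, i ∉ S → i ∉ T → f i = g i
    · rw [if_pos hc, if_pos]
      · have : (fun i : T => h₀ i.1) = fun i : T => f i.1 := funext hTS
        rw [this]
      · intro i hiT
        by_cases hiS : i ∈ S
        · simp [hh₀, hiS]
        · simp only [hh₀, if_neg hiS]
          exact hc i hiS hiT
    · rw [if_neg hc, if_neg, mul_zero]
      intro hcon
      apply hc
      intro i hiS hiT
      have := hcon i hiT
      simpa [hh₀, hiS] using this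
  · intro h _ hne
    obtain ⟨i, hi⟩ := Function.ne_iff.mp hne
    by_cases hiS : i ∈ S
    · have hiT : i ∉ T := fun hiT => hd.le_bot ⟨hiS, hiT⟩
      have : h i ≠ g i := by simpa [hh₀, hiS] using hi
      have hP : P h g = 0 := by
        rw [hQ, if_neg]
        intro hcon
        exact this (hcon i hiT)
      rw [hP, mul_zero]
    · have : h i ≠ f i := by simpa [hh₀, hiS] using hi
      have hM : M f h = 0 := by
        rw [hN, if_neg]
        intro hcon
        exact this ((hcon i hiS).symm)
      rw [hM, zero_mul]
  · intro hcon
    exact absurd (Finset.mem_univ h₀) hcon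

/-- Operators with disjoint supports commute. -/
lemma supported_disjoint_comm {S T : Set V} {M P : Op d}
    (hM : SupportedOn d S M) (hP : SupportedOn d T P) (hd : Disjoint S T) :
    M * P = P * M := by
  obtain ⟨N, hN⟩ := hM
  obtain ⟨Q, hQ⟩ := hP
  ext f g
  rw [mul_entry_of_disjoint hN hQ hd f g, mul_entry_of_disjoint hQ hN hd.symm f g]
  by_cases hc : ∀ i, i ∉ S → i ∉ T → f i = g i
  · rw [if_pos hc, if_pos (fun i hT hS => hc i hS hT), mul_comm]
  · rw [if_neg hc, if_neg (fun hc' => hc fun i hS hT => hc' i hT hS)]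

/-- The single-site matrix unit `|a⟩⟨b|` at site `y`. -/
noncomputable def siteUnit (d : V → ℕ) (y : V) (a b : Fin (d y)) : Op d :=
  Matrix.of fun f g =>
    if f y = a ∧ g y = b ∧ ∀ i, i ≠ y → f i = g i then 1 else 0

lemma supportedOn_siteUnit (y : V) (a b : Fin (d y)) :
    SupportedOn d {y} (siteUnit d y a b) := by
  refine ⟨Matrix.of fun u v =>
    if u ⟨y, rfl⟩ = a ∧ v ⟨y, rfl⟩ = b then 1 else 0, fun f g => ?_⟩
  show (if f y = a ∧ g y = b ∧ ∀ i, i ≠ y → f i = g i then (1:ℂ) else 0) = _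
  by_cases hfg : ∀ i ∉ ({y} : Set V), f i = g i
  · rw [if_pos hfg]
    have hfg' : ∀ i, i ≠ y → f i = g i := fun i hi =>
      hfg i (by simpa [Set.mem_singleton_iff] using hi)
    show _ = if _ then (1:ℂ) else 0
    by_cases hab : f y = a ∧ g y = b
    · rw [if_pos ⟨hab.1, hab.2, hfg'⟩, if_pos hab]
    · rw [if_neg (fun hcon => hab ⟨hcon.1, hcon.2.1⟩), if_neg hab]
  · rw [if_neg hfg, if_neg]
    intro hcon
    exact hfg fun i hi => hcon.2.2 i (by simpa [Set.mem_singleton_iff] using hi)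

lemma mul_siteUnit_apply (M : Op d) (y : V) (a b : Fin (d y)) (f g : Cfg d) :
    (M * siteUnit d y a b) f g =
      if g y = b then M f (Function.update g y a) else 0 := by
  classical
  rw [Matrix.mul_apply]
  rw [Finset.sum_eq_single (Function.update g y a)]
  · have : siteUnit d y a b (Function.update g y a) g =
        if g y = b then 1 else 0 := by
      show (if _ then (1:ℂ) else 0) = _
      by_cases hb : g y = b
      · rw [if_pos ⟨Function.update_self y a g, hb,
          fun i hi => Function.update_of_ne hi a g⟩, if_pos hb]
      · rw [if_neg (fun hcon => hb hcon.2.1), if_neg hb]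
    rw [this]
    by_cases hb : g y = b
    · rw [if_pos hb, if_pos hb, mul_one]
    · rw [if_neg hb, if_neg hb, mul_zero]
  · intro h _ hne
    have : siteUnit d y a b h g = 0 := by
      rw [siteUnit, Matrix.of_apply, if_neg]
      intro ⟨h1, _, h3⟩
      apply hne
      funext i
      by_cases hi : i = y
      · subst hi; rw [Function.update_self]; exact h1
      · rw [Function.update_of_ne hi]; exact h3 i hi
    rw [this, mul_zero]
  · intro hcon
    exact absurd (Finset.mem_univ _) hcon

lemma siteUnit_mul_apply (M : Op d) (y : V) (a b : Fin (d y)) (f g : Cfg d) :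
    (siteUnit d y a b * M) f g =
      if f y = a then M (Function.update f y b) g else 0 := by
  classical
  rw [Matrix.mul_apply]
  rw [Finset.sum_eq_single (Function.update f y b)]
  · have : siteUnit d y a b f (Function.update f y b) =
        if f y = a then 1 else 0 := by
      show (if _ then (1:ℂ) else 0) = _
      by_cases ha : f y = a
      · rw [if_pos ⟨ha, Function.update_self y b f,
          fun i hi => (Function.update_of_ne hi b f).symm⟩, if_pos ha]
      · rw [if_neg (fun hcon => ha hcon.1), if_neg ha]
    rw [this]
    by_cases ha : f y = a
    · rw [if_pos ha, if_pos ha, one_mul]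
    · rw [if_neg ha, if_neg ha, zero_mul]
  · intro h _ hne
    have : siteUnit d y a b f h = 0 := by
      rw [siteUnit, Matrix.of_apply, if_neg]
      intro ⟨_, h2, h3⟩
      apply hne
      funext i
      by_cases hi : i = y
      · subst hi; rw [Function.update_self]; exact h2
      · rw [Function.update_of_ne hi]; exact (h3 i hi).symm
    rw [this, zero_mul]
  · intro hcon
    exact absurd (Finset.mem_univ _) hcon

/-- If `M` commutes with every single-site matrix unit outside `S`,
then `M` is supported on `S`. -/
lemma supportedOn_of_commute (S : Set V) (M : Op d)
    (hc : ∀ y ∉ S, ∀ a b : Fin (d y),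
      M * siteUnit d y a b = siteUnit d y a b * M) :
    SupportedOn d S M := by
  classical
  have key : ∀ y ∉ S, ∀ (a b : Fin (d y)) (f g : Cfg d),
      (if g y = b then M f (Function.update g y a) else 0) =
      (if f y = a then M (Function.update f y b) g else 0) := by
    intro y hy a b f g
    rw [← mul_siteUnit_apply, ← siteUnit_mul_apply, hc y hy a b]
  have vanish : ∀ y ∉ S, ∀ f g : Cfg d, f y ≠ g y → M f g = 0 := by
    intro y hy f g hne
    have := key y hy (g y) (g y) f g
    rw [if_pos rfl, Function.update_eq_self, if_neg hne] at this
    exact this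
  have step : ∀ y ∉ S, ∀ f g : Cfg d, f y = g y → ∀ c : Fin (d y),
      M (Function.update f y c) (Function.update g y c) = M f g := by
    intro y hy f g hfg c
    have := key y hy c (g y) (Function.update f y c) g
    rw [if_pos rfl, if_pos (Function.update_self y c f),
      Function.update_idem, ← hfg, Function.update_eq_self] at this
    exact this
  by_cases hne : Nonempty (Cfg d)
  · obtain ⟨f₀⟩ := hne
    set ow : Cfg d → Finset V → Cfg d :=
      fun f T i => if i ∈ T ∧ i ∉ S then f₀ i else f i with how
    have main : ∀ T : Finset V, ∀ f g : Cfg d, (∀ i ∉ S, f i = g i) →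
        M (ow f T) (ow g T) = M f g := by
      intro T
      induction T using Finset.induction_on with
      | empty =>
        intro f g _
        congr 1
      | @insert y T hyT ih =>
        intro f g hfg
        by_cases hyS : y ∈ S
        · have hsame : ∀ f' : Cfg d, ow f' (insert y T) = ow f' T := by
            intro f'
            funext i
            by_cases hi : i = y
            · subst hi; simp [how, hyS]
            · simp [how, Finset.mem_insert, hi]
          rw [hsame f, hsame g]
          exact ih f g hfg
        · have hup : ∀ f' : Cfg d,
              ow f' (insert y T) = Function.update (ow f' T) y (f₀ y) := by
            intro f'
            funext i
            by_cases hi : i = y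
            · subst hi; simp [how, hyS]
            · rw [Function.update_of_ne hi]
              simp [how, Finset.mem_insert, hi]
          have hyy : ow f T y = ow g T y := by
            by_cases hT : y ∈ T ∧ y ∉ S
            · simp only [how, if_pos hT]
            · simp only [how, if_neg hT]
              exact hfg y hyS
          rw [hup f, hup g, step y hyS _ _ hyy (f₀ y)]
          exact ih f g hfg
    set patch : (∀ i : S, Fin (d i.1)) → Cfg d :=
      fun u i => if h : i ∈ S then u ⟨i, h⟩ else f₀ i with hpatch
    refine ⟨Matrix.of fun u v => M (patch u) (patch v), fun f g => ?_⟩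
    by_cases hcond : ∀ i ∉ S, f i = g i
    · rw [if_pos hcond]
      have hpow : ∀ f' : Cfg d, patch (fun i : S => f' i.1) = ow f' Finset.univ := by
        intro f'
        funext i
        by_cases hi : i ∈ S <;> simp [hpatch, how, hi]
      show _ = M (patch fun i : S => f i.1) (patch fun i : S => g i.1)
      rw [hpow f, hpow g, main Finset.univ f g hcond]
    · rw [if_neg hcond]
      push_neg at hcond
      obtain ⟨y, hyS, hfg⟩ := hcond
      exact vanish y hyS f g hfg
  · exact ⟨0, fun f => ((not_nonempty_iff.mp hne).false f).elim⟩

end Aux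

/-- If the algebra automorphism `α` has range `R` (images of single-site operators are
supported on the ball of radius `R`), then `α⁻¹` also has range `R`. -/
theorem inverse_qca_has_same_range {V : Type} [Fintype V] [DecidableEq V]
    [PseudoMetricSpace V] (d : V → ℕ) (R : ℝ) (α : Op d ≃ₐ[ℂ] Op d)
    (h : ∀ (x : V) (O : Op d), SupportedOn d {x} O →
      SupportedOn d (Metric.closedBall x R) (α O)) :
    ∀ (x : V) (O : Op d), SupportedOn d {x} O →
      SupportedOn d (Metric.closedBall x R) (α.symm O) := by
  intro x O hO
  apply supportedOn_of_commute
  intro y hy a b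
  have hE : SupportedOn d {y} (siteUnit d y a b) := supportedOn_siteUnit y a b
  have hαE := h y _ hE
  have hdisj : Disjoint {x} (Metric.closedBall y R) := by
    rw [Set.disjoint_singleton_left]
    intro hx
    apply hy
    rw [Metric.mem_closedBall, dist_comm]
    exact Metric.mem_closedBall.mp hx
  have hcomm : O * α (siteUnit d y a b) = α (siteUnit d y a b) * O :=
    supported_disjoint_comm hO hαE hdisj
  calc α.symm O * siteUnit d y a b
      = α.symm O * α.symm (α (siteUnit d y a b)) := by
        rw [AlgEquiv.symm_apply_apply]
    _ = α.symm (O * α (siteUnit d y a b)) := (_root_.map_mul α.symm _ _).symm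
    _ = α.symm (α (siteUnit d y a b) * O) := by rw [hcomm]
    _ = siteUnit d y a b * α.symm O := by
        rw [_root_.map_mul, AlgEquiv.symm_apply_apply]
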